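/- For α ∈ (0, 1/2) and all B with 0 ≤ B ≤ 2, the integral ∫₀^∞ |B - v|^(-α) (v^(-α) - (1+v)^(-α)) dv is at most π B^(1-2α) + (1/(1-2α)) (2-B)^(1-2α) + 3/(1-2α); in particular sup_{0 ≤ B ≤ 2} of this integral is finite. -/

import Mathlib

open MeasureTheory Real Set

lemma diff_rpow_le {α v : ℝ} (hα : 0 < α) (hα1 : α ≤ 1) (hv : 0 < v) :
    v ^ (-α) - (1 + v) ^ (-α) ≤ α * v ^ (-α - 1) := by
  have hv1 : (0:ℝ) < 1 + v := by linarith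
  have ha : (0:ℝ) < v ^ α := rpow_pos_of_pos hv α
  have hb : (0:ℝ) < (1 + v) ^ α := rpow_pos_of_pos hv1 α
  have hab : v ^ α ≤ (1 + v) ^ α := rpow_le_rpow hv.le (by linarith) hα.le
  have key : (1 + v) ^ α ≤ v ^ α + α * v ^ (α - 1) := by
    have h2 : (1 + 1/v) ^ α ≤ 1 + α * (1/v) :=
      rpow_one_add_le_one_add_mul_self (by have := one_div_pos.mpr hv; linarith) hα.le hα1
    have h1 : (1 + v) = v * (1 + 1/v) := by field_simp; ring
    calc (1+v)^α = v^α * (1+1/v)^α := by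
          rw [h1, mul_rpow hv.le (by positivity)]
      _ ≤ v^α * (1 + α*(1/v)) := by
          exact mul_le_mul_of_nonneg_left h2 ha.le
      _ = v^α + α * v^(α-1) := by
          rw [rpow_sub hv, rpow_one]; field_simp
  have e3 : v ^ (-α - 1) = v ^ (α-1) / (v^α * v^α) := by
    rw [eq_div_iff (by positivity), ← rpow_add hv, ← rpow_add hv]
    congr 1; ring
  rw [rpow_neg hv.le, rpow_neg hv1.le, e3]
  rw [inv_sub_inv ha.ne' hb.ne']
  rw [mul_div_assoc']
  apply div_le_div₀ (by positivity) (by linarith) (by positivity)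
  exact mul_le_mul_of_nonneg_left hab ha.le

lemma integrableOn_sqrtInv {B : ℝ} (hB : 0 < B) :
    IntegrableOn (fun v => ((B - v) * v) ^ (-(1/2) : ℝ)) (Ioc 0 B) := by
  have hmeas1 : AEStronglyMeasurable (fun v => ((B - v) * v) ^ (-(1/2) : ℝ))
      (volume.restrict (Ioo (0:ℝ) B)) := by
    apply ContinuousOn.aestronglyMeasurable _ measurableSet_Ioo
    intro x hx
    have hx0 : 0 < x := hx.1
    have hxB : x < B := hx.2
    have hne : (B - x) * x ≠ 0 := by nlinarith
    have hin : ContinuousAt (fun v : ℝ => (B - v) * v) x := by fun_prop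
    exact (hin.rpow_const (Or.inl hne)).continuousWithinAt
  have half : IntegrableOn (fun v => ((B - v) * v) ^ (-(1/2) : ℝ)) (Ioc 0 (B/2)) := by
    rw [integrableOn_Ioc_iff_integrableOn_Ioo]
    apply Integrable.mono' (g := fun v => (B/2) ^ (-(1/2):ℝ) * v ^ (-(1/2):ℝ))
    · have base : IntegrableOn (fun x : ℝ => x ^ (-(1/2):ℝ)) (Ioc 0 (B/2)) :=
        (intervalIntegral.intervalIntegrable_rpow' (by norm_num)).1
      have base2 : IntegrableOn (fun v : ℝ => (B/2) ^ (-(1/2):ℝ) * v ^ (-(1/2):ℝ))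
          (Ioc 0 (B/2)) := base.const_mul _
      exact base2.mono_set Ioo_subset_Ioc_self
    · exact hmeas1.mono_set (Ioo_subset_Ioo_right (by linarith))
    · rw [ae_restrict_iff' measurableSet_Ioo]
      apply ae_of_all
      intro v hv
      have hv0 : 0 < v := hv.1
      have hvB : v < B/2 := hv.2
      have ht : 0 < (B - v) * v := by nlinarith
      rw [Real.norm_of_nonneg (rpow_nonneg ht.le _)]
      calc ((B - v) * v) ^ (-(1/2):ℝ) ≤ ((B/2) * v) ^ (-(1/2):ℝ) := by
            apply rpow_le_rpow_of_nonpos (by positivity) (by nlinarith) (by norm_num)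
        _ = (B/2) ^ (-(1/2):ℝ) * v ^ (-(1/2):ℝ) := mul_rpow (by positivity) hv0.le
  have half2 : IntegrableOn (fun v => ((B - v) * v) ^ (-(1/2) : ℝ)) (Ioc (B/2) B) := by
    rw [integrableOn_Ioc_iff_integrableOn_Ioo]
    apply Integrable.mono' (g := fun v => (B/2) ^ (-(1/2):ℝ) * (B - v) ^ (-(1/2):ℝ))
    · have h0 : IntervalIntegrable (fun x : ℝ => x ^ (-(1/2):ℝ)) volume 0 (B/2) :=
        intervalIntegral.intervalIntegrable_rpow' (by norm_num)
      have h1 := (h0.comp_sub_left B).2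
      have e1 : B - B/2 = B/2 := by ring
      have e2 : B - 0 = B := by ring
      rw [e1, e2] at h1
      have h2 : IntegrableOn (fun x : ℝ => (B - x) ^ (-(1/2):ℝ)) (Ioc (B/2) B) := h1
      have h3 : IntegrableOn (fun v : ℝ => (B/2) ^ (-(1/2):ℝ) * (B - v) ^ (-(1/2):ℝ))
          (Ioc (B/2) B) := h2.const_mul _
      exact h3.mono_set Ioo_subset_Ioc_self
    · exact hmeas1.mono_set (Ioo_subset_Ioo_left (by linarith))
    · rw [ae_restrict_iff' measurableSet_Ioo]
      apply ae_of_all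
      intro v hv
      have hv0 : B/2 < v := hv.1
      have hvB : v < B := hv.2
      have ht : 0 < (B - v) * v := by nlinarith
      rw [Real.norm_of_nonneg (rpow_nonneg ht.le _)]
      calc ((B - v) * v) ^ (-(1/2):ℝ) ≤ ((B - v) * (B/2)) ^ (-(1/2):ℝ) := by
            apply rpow_le_rpow_of_nonpos (by nlinarith) (by nlinarith) (by norm_num)
        _ = (B/2) ^ (-(1/2):ℝ) * (B - v) ^ (-(1/2):ℝ) := by
            rw [mul_comm (B - v) (B/2)]
            exact mul_rpow (by positivity) (by linarith)
  have := half.union half2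
  rwa [Ioc_union_Ioc_eq_Ioc (by positivity) (by linarith)] at this

lemma integral_sqrtInv {B : ℝ} (hB : 0 < B) :
    ∫ v in Ioc (0:ℝ) B, ((B - v) * v) ^ (-(1/2) : ℝ) = π := by
  rw [← intervalIntegral.integral_of_le hB.le]
  have hF : ∀ x ∈ Ioo (0:ℝ) B,
      HasDerivAt (fun v => arcsin (2*v/B - 1)) (((B - x) * x) ^ (-(1/2):ℝ)) x := by
    intro x hx
    obtain ⟨hx0, hxB⟩ := hx
    have ht : 0 < (B - x) * x := by nlinarith
    have hy1 : 2*x/B - 1 ≠ -1 := by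
      intro h
      have h2 : 2*x/B = 0 := by linarith
      rw [div_eq_zero_iff] at h2
      rcases h2 with h2 | h2 <;> linarith
    have hy2 : 2*x/B - 1 ≠ 1 := by
      intro h
      have h2 : 2*x/B = 2 := by linarith
      rw [div_eq_iff hB.ne'] at h2
      linarith
    have inner : HasDerivAt (fun v : ℝ => 2*v/B - 1) (2/B) x := by
      simpa using (((hasDerivAt_id x).const_mul (2:ℝ)).div_const B).sub_const 1
    have outer := Real.hasDerivAt_arcsin hy1 hy2
    have hcomp := outer.comp x inner
    refine hcomp.congr_deriv ?_
    have h1 : 1 - (2*x/B - 1)^2 = (2/B)^2 * ((B - x)*x) := by field_simp; ring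
    rw [h1, Real.sqrt_mul (by positivity) _, Real.sqrt_sq (by positivity)]
    rw [Real.rpow_neg ht.le, Real.sqrt_eq_rpow]
    field_simp
  have hcont : ContinuousOn (fun v => arcsin (2*v/B - 1)) (Icc 0 B) :=
    (Real.continuous_arcsin.comp (by continuity)).continuousOn
  have hint : IntervalIntegrable (fun v => ((B - v) * v) ^ (-(1/2) : ℝ)) volume 0 B := by
    rw [intervalIntegrable_iff_integrableOn_Ioc_of_le hB.le]
    exact integrableOn_sqrtInv hB
  rw [intervalIntegral.integral_eq_sub_of_hasDerivAt_of_le hB.le hcont hF hint]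
  have e1 : 2*B/B - 1 = 1 := by field_simp; norm_num
  have e2 : 2*0/B - 1 = -1 := by simp
  rw [e1, e2, Real.arcsin_one, Real.arcsin_neg_one]
  ring

lemma main_bound {α B : ℝ} (hα1 : 0 < α) (hα2 : α < 1/2) (hB : 0 ≤ B) (hB2 : B ≤ 2) :
    (∫ v in Set.Ioi (0:ℝ), |B - v| ^ (-α) * (v ^ (-α) - (1 + v) ^ (-α))) ≤
      Real.pi * B ^ (1 - 2*α) + (1 / (1 - 2*α)) * (2 - B) ^ (1 - 2*α) + 3 / (1 - 2*α) := by
  have hαle : α ≤ 1 := by linarith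
  have hexp : (0:ℝ) < 1 - 2*α := by linarith
  set f : ℝ → ℝ := fun v => |B - v| ^ (-α) * (v ^ (-α) - (1 + v) ^ (-α)) with hfdef
  have hdpos : ∀ v : ℝ, 0 < v → 0 ≤ v ^ (-α) - (1 + v) ^ (-α) := fun v hv =>
    sub_nonneg.mpr (rpow_le_rpow_of_nonpos hv (by linarith) (by linarith))
  have hfnn : ∀ v : ℝ, 0 < v → 0 ≤ f v := fun v hv =>
    mul_nonneg (rpow_nonneg (abs_nonneg _) _) (hdpos v hv)
  have hfm : ∀ S : Set ℝ, MeasurableSet S → (∀ x ∈ S, 0 < x ∧ x ≠ B) →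
      AEStronglyMeasurable f (volume.restrict S) := by
    intro S hS hprop
    apply ContinuousOn.aestronglyMeasurable _ hS
    intro x hx
    obtain ⟨hx0, hxB⟩ := hprop x hx
    have h1 : ContinuousAt (fun v : ℝ => |B - v| ^ (-α)) x := by
      apply ContinuousAt.rpow_const (by fun_prop)
      exact Or.inl (abs_ne_zero.mpr (sub_ne_zero_of_ne (Ne.symm hxB)))
    have h2 : ContinuousAt (fun v : ℝ => v ^ (-α)) x :=
      continuousAt_id.rpow_const (Or.inl hx0.ne')
    have h3 : ContinuousAt (fun v : ℝ => (1 + v) ^ (-α)) x := by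
      apply ContinuousAt.rpow_const (by fun_prop)
      exact Or.inl (by positivity)
    exact (h1.mul (h2.sub h3)).continuousWithinAt
  -- pointwise bounds
  have hred : ∀ v : ℝ, 0 < v → f v ≤ |B - v| ^ (-α) * v ^ (-α) := by
    intro v hv
    apply mul_le_mul_of_nonneg_left _ (rpow_nonneg (abs_nonneg _) _)
    have : 0 ≤ (1 + v) ^ (-α) := rpow_nonneg (by linarith) _
    linarith
  have hb1 : ∀ v ∈ Ioc (0:ℝ) B, f v ≤ B ^ (1-2*α) * ((B - v) * v) ^ (-(1/2):ℝ) := by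
    intro v hv
    obtain ⟨hv0, hvB⟩ := hv
    rcases eq_or_lt_of_le hvB with heq | hlt
    · have e0 : |B - v| = 0 := by rw [heq]; simp
      have e0' : (B - v) * v = 0 := by rw [heq]; simp
      rw [hfdef]
      simp only [e0, e0']
      rw [Real.zero_rpow (by linarith : -α ≠ 0), Real.zero_rpow (by norm_num : (-(1/2):ℝ) ≠ 0)]
      simp
    · have hBv : 0 < B - v := by linarith
      have ht : 0 < (B - v) * v := by positivity
      have e1 : |B - v| = B - v := abs_of_pos hBv
      calc f v ≤ |B - v| ^ (-α) * v ^ (-α) := hred v hv0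
        _ = ((B - v) * v) ^ (-α) := by rw [e1, ← mul_rpow hBv.le hv0.le]
        _ ≤ B ^ (1-2*α) * ((B - v) * v) ^ (-(1/2):ℝ) := by
            have e2 : ((B - v) * v) ^ (-α)
                = ((B - v) * v) ^ ((1/2:ℝ) - α) * ((B - v) * v) ^ (-(1/2):ℝ) := by
              rw [← rpow_add ht]; congr 1; ring
            rw [e2]
            apply mul_le_mul_of_nonneg_right _ (rpow_nonneg ht.le _)
            calc ((B - v) * v) ^ ((1/2:ℝ) - α) ≤ (B^2) ^ ((1/2:ℝ) - α) :=
                  rpow_le_rpow ht.le (by nlinarith) (by linarith)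
              _ = B ^ (1-2*α) := by
                  rw [← Real.rpow_natCast B 2, ← Real.rpow_mul hB]
                  congr 1
                  push_cast
                  ring
  have hb2 : ∀ v ∈ Ioc B 2, f v ≤ (v - B) ^ (-(2*α)) := by
    intro v hv
    obtain ⟨hvB, hv2⟩ := hv
    have hv0 : 0 < v := lt_of_le_of_lt hB hvB
    have hvB' : 0 < v - B := by linarith
    have e1 : |B - v| = v - B := by rw [abs_sub_comm]; exact abs_of_pos hvB'
    calc f v ≤ |B - v| ^ (-α) * v ^ (-α) := hred v hv0
      _ ≤ (v - B) ^ (-α) * (v - B) ^ (-α) := by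
          rw [e1]
          apply mul_le_mul_of_nonneg_left _ (rpow_nonneg hvB'.le _)
          exact rpow_le_rpow_of_nonpos hvB' (by linarith) (by linarith)
      _ = (v - B) ^ (-(2*α)) := by rw [← rpow_add hvB']; congr 1; ring
  have hb3 : ∀ v ∈ Ioc (2:ℝ) 4, f v ≤ (1/4) * (v - 2) ^ (-α) := by
    intro v hv
    obtain ⟨hv2, hv4⟩ := hv
    have hv0 : (0:ℝ) < v := by linarith
    have hv2' : (0:ℝ) < v - 2 := by linarith
    have e1 : |B - v| = v - B := by rw [abs_sub_comm]; exact abs_of_pos (by linarith)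
    have hA : |B - v| ^ (-α) ≤ (v - 2) ^ (-α) := by
      rw [e1]; exact rpow_le_rpow_of_nonpos hv2' (by linarith) (by linarith)
    have hD : v ^ (-α) - (1+v) ^ (-α) ≤ α * v ^ (-α - 1) := diff_rpow_le hα1 hαle hv0
    have hD2 : α * v ^ (-α-1) ≤ 1/4 := by
      have h1 : v ^ (-α-1) ≤ v ^ (-1:ℝ) :=
        rpow_le_rpow_of_exponent_le (by linarith) (by linarith)
      have h2 : v ^ (-1:ℝ) = v⁻¹ := rpow_neg_one v
      have h3 : v⁻¹ ≤ 1/2 := by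
        rw [inv_le_comm₀ hv0 (by norm_num)]
        linarith
      nlinarith [rpow_nonneg hv0.le (-α-1)]
    calc f v ≤ (v-2) ^ (-α) * (α * v ^ (-α-1)) :=
          mul_le_mul hA hD (hdpos v hv0) (rpow_nonneg hv2'.le _)
      _ ≤ (v-2) ^ (-α) * (1/4) := mul_le_mul_of_nonneg_left hD2 (rpow_nonneg hv2'.le _)
      _ = (1/4) * (v-2) ^ (-α) := mul_comm _ _
  have hb4 : ∀ v ∈ Ioi (4:ℝ), f v ≤ (α * 2 ^ α) * v ^ (-(1+2*α)) := by
    intro v hv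
    have hv4 : (4:ℝ) < v := hv
    have hv0 : (0:ℝ) < v := by linarith
    have e1 : |B - v| = v - B := by rw [abs_sub_comm]; exact abs_of_pos (by linarith)
    have hA : |B - v| ^ (-α) ≤ (v/2) ^ (-α) := by
      rw [e1]; exact rpow_le_rpow_of_nonpos (by linarith) (by linarith) (by linarith)
    have hA2 : (v/2) ^ (-α) = 2 ^ α * v ^ (-α) := by
      rw [Real.div_rpow hv0.le (by norm_num), Real.rpow_neg (by norm_num : (0:ℝ) ≤ 2),
        div_inv_eq_mul]
      ring
    have hD : v ^ (-α) - (1+v) ^ (-α) ≤ α * v ^ (-α - 1) := diff_rpow_le hα1 hαle hv0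
    have hmul : v ^ (-α) * v ^ (-α-1) = v ^ (-(1+2*α)) := by
      rw [← rpow_add hv0]; congr 1; ring
    calc f v ≤ (2 ^ α * v ^ (-α)) * (α * v ^ (-α-1)) := by
          rw [← hA2]
          exact mul_le_mul hA hD (hdpos v hv0) (by positivity)
      _ = (α * 2 ^ α) * (v ^ (-α) * v ^ (-α-1)) := by ring
      _ = (α * 2 ^ α) * v ^ (-(1+2*α)) := by rw [hmul]
  -- piece 1
  have hp1 : IntegrableOn f (Ioc 0 B) ∧
      (∫ v in Ioc (0:ℝ) B, f v) ≤ π * B ^ (1-2*α) := by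
    rcases eq_or_lt_of_le hB with hB0 | hB0
    · constructor
      · rw [← hB0]
        simp [Set.Ioc_self]
      · rw [← hB0]
        rw [Set.Ioc_self, Measure.restrict_empty, integral_zero_measure,
          Real.zero_rpow hexp.ne']
        simp
    · have hg1 : IntegrableOn (fun v => B ^ (1-2*α) * ((B - v) * v) ^ (-(1/2):ℝ)) (Ioc 0 B) :=
        (integrableOn_sqrtInv hB0).const_mul _
      have hfi : IntegrableOn f (Ioc 0 B) := by
        rw [integrableOn_Ioc_iff_integrableOn_Ioo]
        apply Integrable.mono' (hg1.mono_set Ioo_subset_Ioc_self)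
          (hfm (Ioo 0 B) measurableSet_Ioo (fun x hx => ⟨hx.1, hx.2.ne⟩))
        rw [ae_restrict_iff' measurableSet_Ioo]
        apply ae_of_all
        intro v hv
        rw [Real.norm_of_nonneg (hfnn v hv.1)]
        exact hb1 v (Ioo_subset_Ioc_self hv)
      refine ⟨hfi, ?_⟩
      calc (∫ v in Ioc (0:ℝ) B, f v)
          ≤ ∫ v in Ioc (0:ℝ) B, B ^ (1-2*α) * ((B - v) * v) ^ (-(1/2):ℝ) :=
            setIntegral_mono_on hfi hg1 measurableSet_Ioc hb1
        _ = B ^ (1-2*α) * ∫ v in Ioc (0:ℝ) B, ((B - v) * v) ^ (-(1/2):ℝ) :=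
            integral_const_mul _ _
        _ = π * B ^ (1-2*α) := by rw [integral_sqrtInv hB0, mul_comm]
  -- piece 2
  have hg2 : IntegrableOn (fun v : ℝ => (v - B) ^ (-(2*α))) (Ioc B 2) := by
    have h0 : IntervalIntegrable (fun x : ℝ => x ^ (-(2*α))) volume 0 (2 - B) :=
      intervalIntegral.intervalIntegrable_rpow' (by linarith)
    have h1 := (h0.comp_sub_right B).1
    have e1 : 0 + B = B := by ring
    have e2 : 2 - B + B = 2 := by ring
    rw [e1, e2] at h1
    exact h1
  have hfi2 : IntegrableOn f (Ioc B 2) := by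
    rw [integrableOn_Ioc_iff_integrableOn_Ioo]
    apply Integrable.mono' (hg2.mono_set Ioo_subset_Ioc_self)
      (hfm (Ioo B 2) measurableSet_Ioo (fun x hx => ⟨lt_of_le_of_lt hB hx.1, hx.1.ne'⟩))
    rw [ae_restrict_iff' measurableSet_Ioo]
    apply ae_of_all
    intro v hv
    rw [Real.norm_of_nonneg (hfnn v (lt_of_le_of_lt hB hv.1))]
    exact hb2 v (Ioo_subset_Ioc_self hv)
  have hI2 : (∫ v in Ioc B 2, f v) ≤ (1/(1-2*α)) * (2 - B) ^ (1-2*α) := by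
    calc (∫ v in Ioc B 2, f v) ≤ ∫ v in Ioc B 2, (v - B) ^ (-(2*α)) :=
          setIntegral_mono_on hfi2 hg2 measurableSet_Ioc hb2
      _ = ∫ v in B..2, (v - B) ^ (-(2*α)) := (intervalIntegral.integral_of_le hB2).symm
      _ = ∫ v in (B-B)..(2-B), v ^ (-(2*α)) :=
          intervalIntegral.integral_comp_sub_right (fun y => y ^ (-(2*α))) B
      _ = (1/(1-2*α)) * (2 - B) ^ (1-2*α) := by
          rw [sub_self, integral_rpow (Or.inl (by linarith))]
          rw [Real.zero_rpow (by linarith : -(2*α) + 1 ≠ 0)]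
          rw [show -(2*α) + 1 = 1 - 2*α by ring]
          ring
  -- piece 3
  have hg3 : IntegrableOn (fun v : ℝ => (1/4) * (v - 2) ^ (-α)) (Ioc 2 4) := by
    have h0 : IntervalIntegrable (fun x : ℝ => x ^ (-α)) volume 0 2 :=
      intervalIntegral.intervalIntegrable_rpow' (by linarith)
    have h1 := (h0.comp_sub_right 2).1
    have e1 : (0:ℝ) + 2 = 2 := by ring
    have e2 : (2:ℝ) + 2 = 4 := by ring
    rw [e1, e2] at h1
    have h2 : IntegrableOn (fun x : ℝ => (x - 2) ^ (-α)) (Ioc 2 4) := h1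
    exact h2.const_mul _
  have hfi3 : IntegrableOn f (Ioc 2 4) := by
    rw [integrableOn_Ioc_iff_integrableOn_Ioo]
    apply Integrable.mono' (hg3.mono_set Ioo_subset_Ioc_self)
      (hfm (Ioo 2 4) measurableSet_Ioo (fun x hx => ⟨by linarith [hx.1], by
        have := hx.1; intro h; rw [h] at this; linarith⟩))
    rw [ae_restrict_iff' measurableSet_Ioo]
    apply ae_of_all
    intro v hv
    rw [Real.norm_of_nonneg (hfnn v (by linarith [hv.1]))]
    exact hb3 v (Ioo_subset_Ioc_self hv)
  have hI3 : (∫ v in Ioc (2:ℝ) 4, f v) ≤ 1 := by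
    have hstep : (∫ v in Ioc (2:ℝ) 4, f v) ≤ ∫ v in Ioc (2:ℝ) 4, (1/4) * (v - 2) ^ (-α) :=
      setIntegral_mono_on hfi3 hg3 measurableSet_Ioc hb3
    have hval : (∫ v in Ioc (2:ℝ) 4, (1/4) * (v - 2) ^ (-α))
        = (1/4) * (2 ^ (1-α) / (1-α)) := by
      rw [← intervalIntegral.integral_of_le (by norm_num : (2:ℝ) ≤ 4)]
      rw [intervalIntegral.integral_const_mul]
      rw [intervalIntegral.integral_comp_sub_right (fun y => y ^ (-α)) 2]
      rw [show (2:ℝ) - 2 = 0 by ring, show (4:ℝ) - 2 = 2 by ring]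
      rw [integral_rpow (Or.inl (by linarith))]
      rw [Real.zero_rpow (by linarith : -α + 1 ≠ 0)]
      rw [show -α + 1 = 1 - α by ring]
      ring
    have h2le : (2:ℝ) ^ (1-α) ≤ 2 := by
      calc (2:ℝ) ^ (1-α) ≤ 2 ^ (1:ℝ) :=
            rpow_le_rpow_of_exponent_le one_le_two (by linarith)
        _ = 2 := rpow_one 2
    have hdiv : (2:ℝ) ^ (1-α) / (1-α) ≤ 4 := by
      calc (2:ℝ) ^ (1-α) / (1-α) ≤ 2 / (1/2:ℝ) :=
            div_le_div₀ (by norm_num) h2le (by norm_num) (by linarith)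
        _ = 4 := by norm_num
    calc (∫ v in Ioc (2:ℝ) 4, f v) ≤ (1/4) * (2 ^ (1-α) / (1-α)) := hstep.trans hval.le
      _ ≤ (1/4) * 4 := by linarith
      _ = 1 := by norm_num
  -- piece 4
  have hg4 : IntegrableOn (fun v : ℝ => (α * 2 ^ α) * v ^ (-(1+2*α))) (Ioi 4) :=
    (integrableOn_Ioi_rpow_of_lt (by linarith) (by norm_num)).const_mul _
  have hfi4 : IntegrableOn f (Ioi 4) := by
    apply Integrable.mono' hg4
      (hfm (Ioi 4) measurableSet_Ioi (fun x hx => ⟨by linarith [mem_Ioi.mp hx], by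
        have := mem_Ioi.mp hx; intro h; rw [h] at this; linarith⟩))
    rw [ae_restrict_iff' measurableSet_Ioi]
    apply ae_of_all
    intro v hv
    rw [Real.norm_of_nonneg (hfnn v (by linarith [mem_Ioi.mp hv]))]
    exact hb4 v hv
  have hI4 : (∫ v in Ioi (4:ℝ), f v) ≤ 1 := by
    have hstep : (∫ v in Ioi (4:ℝ), f v) ≤ ∫ v in Ioi (4:ℝ), (α * 2 ^ α) * v ^ (-(1+2*α)) :=
      setIntegral_mono_on hfi4 hg4 measurableSet_Ioi hb4
    have hval : (∫ v in Ioi (4:ℝ), (α * 2 ^ α) * v ^ (-(1+2*α)))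
        = (α * 2 ^ α) * (4 ^ (-(2*α):ℝ) / (2*α)) := by
      rw [integral_const_mul, integral_Ioi_rpow_of_lt (by linarith) (by norm_num)]
      rw [show -(1+2*α) + 1 = -(2*α) by ring]
      rw [neg_div, div_neg, neg_neg]
    have h2a : (2:ℝ) ^ α ≤ 2 := by
      calc (2:ℝ) ^ α ≤ 2 ^ (1:ℝ) := rpow_le_rpow_of_exponent_le one_le_two hαle
        _ = 2 := rpow_one 2
    have h4a : (4:ℝ) ^ (-(2*α):ℝ) ≤ 1 :=
      rpow_le_one_of_one_le_of_nonpos (by norm_num) (by linarith)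
    have h2apos : (0:ℝ) < 2 ^ α := rpow_pos_of_pos (by norm_num) _
    have h4apos : (0:ℝ) < 4 ^ (-(2*α):ℝ) := rpow_pos_of_pos (by norm_num) _
    have : (α * 2 ^ α) * (4 ^ (-(2*α):ℝ) / (2*α)) = 2 ^ α * 4 ^ (-(2*α):ℝ) / 2 := by
      field_simp
    have hmm : (2:ℝ) ^ α * (4:ℝ) ^ (-(2*α):ℝ) ≤ 2 * 1 :=
      mul_le_mul h2a h4a h4apos.le (by norm_num)
    calc (∫ v in Ioi (4:ℝ), f v) ≤ (α * 2 ^ α) * (4 ^ (-(2*α):ℝ) / (2*α)) := hstep.trans hval.le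
      _ = 2 ^ α * 4 ^ (-(2*α):ℝ) / 2 := this
      _ ≤ 1 := by linarith
  -- assembly
  obtain ⟨hfi1, hI1⟩ := hp1
  have hu1 : Ioc (0:ℝ) B ∪ Ioc B 2 = Ioc 0 2 := Ioc_union_Ioc_eq_Ioc hB hB2
  have hu2 : Ioc (0:ℝ) 2 ∪ Ioc 2 4 = Ioc 0 4 := Ioc_union_Ioc_eq_Ioc (by norm_num) (by norm_num)
  have hu3 : Ioc (0:ℝ) 4 ∪ Ioi 4 = Ioi 0 := Ioc_union_Ioi_eq_Ioi (by norm_num)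
  have i02 : IntegrableOn f (Ioc 0 2) := by
    have := hfi1.union hfi2; rwa [hu1] at this
  have i04 : IntegrableOn f (Ioc 0 4) := by
    have := i02.union hfi3; rwa [hu2] at this
  have e2 : (∫ v in Ioc (0:ℝ) 2, f v) = (∫ v in Ioc (0:ℝ) B, f v) + ∫ v in Ioc B 2, f v := by
    rw [← hu1]
    exact setIntegral_union (Ioc_disjoint_Ioc_of_le le_rfl) measurableSet_Ioc hfi1 hfi2
  have e4 : (∫ v in Ioc (0:ℝ) 4, f v) = (∫ v in Ioc (0:ℝ) 2, f v) + ∫ v in Ioc (2:ℝ) 4, f v := by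
    rw [← hu2]
    exact setIntegral_union (Ioc_disjoint_Ioc_of_le le_rfl) measurableSet_Ioc i02 hfi3
  have etot : (∫ v in Ioi (0:ℝ), f v)
      = (∫ v in Ioc (0:ℝ) 4, f v) + ∫ v in Ioi (4:ℝ), f v := by
    rw [← hu3]
    exact setIntegral_union Ioc_disjoint_Ioi_same measurableSet_Ioi i04 hfi4
  have h3div : (2:ℝ) ≤ 3 / (1 - 2*α) := by
    rw [le_div_iff₀ hexp]
    nlinarith
  calc (∫ v in Ioi (0:ℝ), f v)
      = (∫ v in Ioc (0:ℝ) B, f v) + (∫ v in Ioc B 2, f v)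
        + (∫ v in Ioc (2:ℝ) 4, f v) + (∫ v in Ioi (4:ℝ), f v) := by
        rw [etot, e4, e2]
    _ ≤ π * B ^ (1-2*α) + (1/(1-2*α)) * (2 - B) ^ (1-2*α) + 3/(1-2*α) := by
        linarith
theorem stmt_10 (α : ℝ) (hα : α ∈ Set.Ioo (0:ℝ) (1/2)) :
    (∀ B ∈ Set.Icc (0:ℝ) 2,
      (∫ v in Set.Ioi (0:ℝ), |B - v| ^ (-α) * (v ^ (-α) - (1 + v) ^ (-α))) ≤
        Real.pi * B ^ (1 - 2*α) + (1 / (1 - 2*α)) * (2 - B) ^ (1 - 2*α)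
          + 3 / (1 - 2*α)) ∧
    ∃ M : ℝ, ∀ B ∈ Set.Icc (0:ℝ) 2,
      (∫ v in Set.Ioi (0:ℝ), |B - v| ^ (-α) * (v ^ (-α) - (1 + v) ^ (-α))) ≤ M := by
  obtain ⟨hα1, hα2⟩ := hα
  have hexp : (0:ℝ) < 1 - 2*α := by linarith
  constructor
  · intro B hB
    exact main_bound hα1 hα2 hB.1 hB.2
  · refine ⟨π * 2 ^ (1 - 2*α) + (1 / (1 - 2*α)) * 2 ^ (1 - 2*α) + 3 / (1 - 2*α), ?_⟩
    intro B hB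
    refine (main_bound hα1 hα2 hB.1 hB.2).trans ?_
    have h1 : B ^ (1 - 2*α) ≤ (2:ℝ) ^ (1 - 2*α) :=
      rpow_le_rpow hB.1 hB.2 hexp.le
    have h2 : (2 - B) ^ (1 - 2*α) ≤ (2:ℝ) ^ (1 - 2*α) :=
      rpow_le_rpow (by linarith [hB.2]) (by linarith [hB.1]) hexp.le
    have h3 : π * B ^ (1 - 2*α) ≤ π * 2 ^ (1 - 2*α) :=
      mul_le_mul_of_nonneg_left h1 pi_pos.le
    have h4 : (1 / (1 - 2*α)) * (2 - B) ^ (1 - 2*α) ≤ (1 / (1 - 2*α)) * 2 ^ (1 - 2*α) :=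
      mul_le_mul_of_nonneg_left h2 (by positivity)
    linarith
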